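/- Let p be a prime, H_p the Heisenberg group over ZMod p, L its subgroup of matrices [[1,0,c],[0,1,b],[0,0,1]] (a 'Lagrangian' subgroup), χ a nontrivial character of ZMod p, and χ̃ the character of L given by χ̃([[1,0,c],[0,1,b],[0,0,1]]) = χ(c). Then the induced representation Ind_L^{H_p}(χ̃) is an irreducible complex representation of H_p of dimension p. -/

import Mathlib

open Matrix

/-- The matrix [[1,a,c],[0,1,b],[0,0,1]]. -/
def heisMat (p : ℕ) (a b c : ZMod p) : Matrix (Fin 3) (Fin 3) (ZMod p) :=
  !![1, a, c; 0, 1, b; 0, 0, 1]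

theorem heisMat_mul (p : ℕ) (a b c a' b' c' : ZMod p) :
    heisMat p a b c * heisMat p a' b' c' = heisMat p (a + a') (b + b') (c + c' + a * b') := by
  ext i j
  fin_cases i <;> fin_cases j <;>
    simp [heisMat, Matrix.mul_apply, Fin.sum_univ_three, Matrix.vecHead, Matrix.vecTail] <;> ring

theorem heisMat_inv_val (p : ℕ) (x : GL (Fin 3) (ZMod p)) (a b c : ZMod p)
    (hx : (x : Matrix (Fin 3) (Fin 3) (ZMod p)) = heisMat p a b c) :
    ((x⁻¹ : GL (Fin 3) (ZMod p)) : Matrix (Fin 3) (Fin 3) (ZMod p)) =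
      heisMat p (-a) (-b) (a * b - c) := by
  have h1 : (x : Matrix (Fin 3) (Fin 3) (ZMod p)) * heisMat p (-a) (-b) (a * b - c) = 1 := by
    rw [hx, heisMat_mul]
    ext i j
    fin_cases i <;> fin_cases j <;>
      simp [heisMat, Matrix.one_apply, Matrix.vecHead, Matrix.vecTail] <;> ring
  calc ((x⁻¹ : GL (Fin 3) (ZMod p)) : Matrix (Fin 3) (Fin 3) (ZMod p))
      = ↑x⁻¹ * 1 := by rw [mul_one]
    _ = ↑x⁻¹ * (↑x * heisMat p (-a) (-b) (a * b - c)) := by rw [h1]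
    _ = (↑x⁻¹ * ↑x) * heisMat p (-a) (-b) (a * b - c) := by rw [mul_assoc]
    _ = heisMat p (-a) (-b) (a * b - c) := by rw [Units.inv_mul, one_mul]

/-- The Heisenberg group mod `p`, as a subgroup of `GL₃(ZMod p)`. -/
def Heis (p : ℕ) : Subgroup (GL (Fin 3) (ZMod p)) where
  carrier := {g | ∃ a b c : ZMod p,
    (g : Matrix (Fin 3) (Fin 3) (ZMod p)) = heisMat p a b c}
  one_mem' := ⟨0, 0, 0, by simp [heisMat, Matrix.one_fin_three]⟩
  mul_mem' := by
    rintro x y ⟨a, b, c, hx⟩ ⟨a', b', c', hy⟩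
    exact ⟨a + a', b + b', c + c' + a * b', by rw [Units.val_mul, hx, hy, heisMat_mul]⟩
  inv_mem' := by
    rintro x ⟨a, b, c, hx⟩
    exact ⟨-a, -b, a * b - c, heisMat_inv_val p x a b c hx⟩

/-- The Lagrangian subgroup of the Heisenberg group consisting of the matrices
`[[1,0,c],[0,1,b],[0,0,1]]`. -/
def Lag (p : ℕ) : Subgroup ↥(Heis p) where
  carrier := {g | ((g : GL (Fin 3) (ZMod p)) : Matrix (Fin 3) (Fin 3) (ZMod p)) 0 1 = 0}
  one_mem' := by
    show ((((1 : ↥(Heis p)) : GL (Fin 3) (ZMod p))) : Matrix (Fin 3) (Fin 3) (ZMod p)) 0 1 = 0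
    simp [Matrix.one_apply]
  mul_mem' := by
    intro x y hx hy
    obtain ⟨a, b, c, hxm⟩ := x.2
    obtain ⟨a', b', c', hym⟩ := y.2
    have ha : a = 0 := by
      have := hx
      simp only [Set.mem_setOf_eq] at this
      rw [hxm] at this
      simpa [heisMat] using this
    have ha' : a' = 0 := by
      have := hy
      simp only [Set.mem_setOf_eq] at this
      rw [hym] at this
      simpa [heisMat] using this
    show ((((x * y : ↥(Heis p)) : GL (Fin 3) (ZMod p))) : Matrix (Fin 3) (Fin 3) (ZMod p)) 0 1 = 0
    rw [Subgroup.coe_mul, Units.val_mul, hxm, hym, heisMat_mul]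
    simp [heisMat, ha, ha']
  inv_mem' := by
    intro x hx
    obtain ⟨a, b, c, hxm⟩ := x.2
    have ha : a = 0 := by
      have := hx
      simp only [Set.mem_setOf_eq] at this
      rw [hxm] at this
      simpa [heisMat] using this
    show ((((x⁻¹ : ↥(Heis p)) : GL (Fin 3) (ZMod p))) : Matrix (Fin 3) (Fin 3) (ZMod p)) 0 1 = 0
    rw [show ((x⁻¹ : ↥(Heis p)) : GL (Fin 3) (ZMod p)) = (x : GL (Fin 3) (ZMod p))⁻¹ from rfl,
      heisMat_inv_val p _ a b c hxm]
    simp [heisMat, ha]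

/-- The space of the representation of the Heisenberg group induced from a character
`χt` of the Lagrangian subgroup: functions `f : H_p → ℂ` with `f(l·h) = χt(l)·f(h)`. -/
noncomputable def indCarrier (p : ℕ) (χt : ↥(Lag p) →* ℂˣ) : Submodule ℂ (↥(Heis p) → ℂ) where
  carrier := {f | ∀ (l : ↥(Lag p)) (h : ↥(Heis p)), f (↑l * h) = (χt l : ℂ) * f h}
  add_mem' := by
    intro f g hf hg l h
    simp only [Pi.add_apply, hf l h, hg l h]
    ring
  zero_mem' := by intro l h; simp
  smul_mem' := by
    intro c f hf l h
    simp only [Pi.smul_apply, smul_eq_mul, hf l h]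
    ring

/-- The representation of the Heisenberg group induced from a character `χt` of the
Lagrangian subgroup, acting by right translation. -/
noncomputable def indRep (p : ℕ) (χt : ↥(Lag p) →* ℂˣ) :
    Representation ℂ ↥(Heis p) ↥(indCarrier p χt) where
  toFun g :=
    { toFun := fun f => ⟨fun h => (f : ↥(Heis p) → ℂ) (h * g), by
        intro l h
        show (f : ↥(Heis p) → ℂ) ((↑l * h) * g) = (χt l : ℂ) * (f : ↥(Heis p) → ℂ) (h * g)
        rw [mul_assoc]
        exact f.2 l (h * g)⟩
      map_add' := by intro f g; apply Subtype.ext; funext h; simp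
      map_smul' := by intro c f; apply Subtype.ext; funext h; simp }
  map_one' := by
    apply LinearMap.ext; intro f; apply Subtype.ext; funext h; simp
  map_mul' := by
    intro g₁ g₂
    apply LinearMap.ext; intro f; apply Subtype.ext; funext h
    show (f : ↥(Heis p) → ℂ) (h * (g₁ * g₂)) = (f : ↥(Heis p) → ℂ) ((h * g₁) * g₂)
    rw [mul_assoc]

open CategoryTheory

section Aux
variable {p : ℕ}

def heisUnit (p : ℕ) (a b c : ZMod p) : GL (Fin 3) (ZMod p) where
  val := heisMat p a b c
  inv := heisMat p (-a) (-b) (a * b - c)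
  val_inv := by
    rw [heisMat_mul]
    ext i j
    fin_cases i <;> fin_cases j <;>
      simp [heisMat, Matrix.one_apply, Matrix.vecHead, Matrix.vecTail] <;> ring
  inv_val := by
    rw [heisMat_mul]
    ext i j
    fin_cases i <;> fin_cases j <;>
      simp [heisMat, Matrix.one_apply, Matrix.vecHead, Matrix.vecTail] <;> ring

def HM (p : ℕ) (a b c : ZMod p) : ↥(Heis p) :=
  ⟨heisUnit p a b c, ⟨a, b, c, rfl⟩⟩

theorem HM_mul (a b c a' b' c' : ZMod p) :
    HM p a b c * HM p a' b' c' = HM p (a + a') (b + b') (c + c' + a * b') := by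
  apply Subtype.ext
  apply Units.ext
  show (heisMat p a b c) * (heisMat p a' b' c') = _
  rw [heisMat_mul]; rfl

theorem HM_eq (h : ↥(Heis p)) (a b c : ZMod p)
    (hm : ((h : GL (Fin 3) (ZMod p)) : Matrix (Fin 3) (Fin 3) (ZMod p)) = heisMat p a b c) :
    h = HM p a b c := by
  apply Subtype.ext
  apply Units.ext
  exact hm

theorem HM_exists (h : ↥(Heis p)) : ∃ a b c : ZMod p, h = HM p a b c := by
  obtain ⟨a, b, c, hm⟩ := h.2
  exact ⟨a, b, c, HM_eq h a b c hm⟩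

@[simp] theorem HM_coe (a b c : ZMod p) :
    (((HM p a b c : ↥(Heis p)) : GL (Fin 3) (ZMod p)) : Matrix (Fin 3) (Fin 3) (ZMod p))
      = heisMat p a b c := rfl

theorem HM_mem_lag (b c : ZMod p) : HM p 0 b c ∈ Lag p := by
  show (((HM p 0 b c : ↥(Heis p)) : GL (Fin 3) (ZMod p)) : Matrix (Fin 3) (Fin 3) (ZMod p)) 0 1 = 0
  simp [heisMat]

theorem HM_inj {a b c a' b' c' : ZMod p} (h : HM p a b c = HM p a' b' c') :
    a = a' ∧ b = b' ∧ c = c' := by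
  have hm : heisMat p a b c = heisMat p a' b' c' := congrArg (fun x => ((x : ↥(Heis p)) : GL (Fin 3) (ZMod p)).val) h
  refine ⟨?_, ?_, ?_⟩
  · have := congrFun (congrFun hm 0) 1; simpa [heisMat] using this
  · have := congrFun (congrFun hm 1) 2; simpa [heisMat] using this
  · have := congrFun (congrFun hm 0) 2; simpa [heisMat] using this

end Aux
section Aux2
variable {p : ℕ}

def coA (h : ↥(Heis p)) : ZMod p := ((h : GL (Fin 3) (ZMod p)) : Matrix (Fin 3) (Fin 3) (ZMod p)) 0 1
def coB (h : ↥(Heis p)) : ZMod p := ((h : GL (Fin 3) (ZMod p)) : Matrix (Fin 3) (Fin 3) (ZMod p)) 1 2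
def coC (h : ↥(Heis p)) : ZMod p := ((h : GL (Fin 3) (ZMod p)) : Matrix (Fin 3) (Fin 3) (ZMod p)) 0 2

@[simp] theorem coA_HM (a b c : ZMod p) : coA (HM p a b c) = a := by simp [coA, heisMat]
@[simp] theorem coB_HM (a b c : ZMod p) : coB (HM p a b c) = b := by simp [coB, heisMat]
@[simp] theorem coC_HM (a b c : ZMod p) : coC (HM p a b c) = c := by simp [coC, heisMat]

theorem HM_co (h : ↥(Heis p)) : h = HM p (coA h) (coB h) (coC h) := by
  obtain ⟨a, b, c, rfl⟩ := HM_exists h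
  simp

theorem lag_decomp (l : ↥(Lag p)) : ∃ b c : ZMod p, (l : ↥(Heis p)) = HM p 0 b c := by
  obtain ⟨a, b, c, hl⟩ := HM_exists (l : ↥(Heis p))
  have ha : a = 0 := by
    have h2 := l.2
    simp only [Lag, Subgroup.mem_mk, Set.mem_setOf_eq] at h2
    rw [hl] at h2
    simpa [heisMat] using h2
  exact ⟨b, c, by rw [hl, ha]⟩

variable (χ : Multiplicative (ZMod p) →* ℂˣ) (χt : ↥(Lag p) →* ℂˣ)
variable (hχ : ∀ (l : ↥(Lag p)) (b c : ZMod p),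
    (l : ↥(Heis p)) = HM p 0 b c → χt l = χ (Multiplicative.ofAdd c))

/-- Coordinates of an element of the induced space. -/
noncomputable def coordEquiv : ↥(indCarrier p χt) ≃ₗ[ℂ] (ZMod p → ℂ) where
  toFun f := fun a => (f : ↥(Heis p) → ℂ) (HM p a 0 0)
  map_add' f g := rfl
  map_smul' c f := rfl
  invFun v := ⟨fun h => (χ (Multiplicative.ofAdd (coC h)) : ℂ) * v (coA h), by
    intro l h
    obtain ⟨b', c', hl⟩ := lag_decomp l
    obtain ⟨a, b, c, rfl⟩ := HM_exists h
    have hmul : (l : ↥(Heis p)) * HM p a b c = HM p a (b' + b) (c' + c) := by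
      rw [hl, HM_mul]; ring_nf
    show (χ (Multiplicative.ofAdd (coC ((l : ↥(Heis p)) * HM p a b c))) : ℂ) *
        v (coA ((l : ↥(Heis p)) * HM p a b c)) = _
    rw [hmul, hχ l b' c' hl]
    simp only [coA_HM, coC_HM]
    rw [show Multiplicative.ofAdd (c' + c) =
      Multiplicative.ofAdd c' * Multiplicative.ofAdd c from rfl, _root_.map_mul]
    push_cast
    ring⟩
  left_inv f := by
    apply Subtype.ext
    funext h
    obtain ⟨a, b, c, rfl⟩ := HM_exists h
    show (χ (Multiplicative.ofAdd (coC (HM p a b c))) : ℂ) *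
      (f : ↥(Heis p) → ℂ) (HM p (coA (HM p a b c)) 0 0) = _
    simp only [coA_HM, coC_HM]
    have hmul : (HM p 0 b c) * HM p a 0 0 = HM p a b c := by
      rw [HM_mul]; ring_nf
    have := f.2 ⟨HM p 0 b c, HM_mem_lag b c⟩ (HM p a 0 0)
    rw [show ((⟨HM p 0 b c, HM_mem_lag b c⟩ : ↥(Lag p)) : ↥(Heis p)) = HM p 0 b c from rfl,
      hmul] at this
    rw [hχ ⟨HM p 0 b c, HM_mem_lag b c⟩ b c rfl] at this
    exact this.symm
  right_inv v := by
    funext a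
    show (χ (Multiplicative.ofAdd (coC (HM p a 0 0))) : ℂ) * v (coA (HM p a 0 0)) = v a
    simp

end Aux2
section Aux3
variable {p : ℕ}
variable (χ : Multiplicative (ZMod p) →* ℂˣ) (χt : ↥(Lag p) →* ℂˣ)
variable (hχ : ∀ (l : ↥(Lag p)) (b c : ZMod p),
    (l : ↥(Heis p)) = HM p 0 b c → χt l = χ (Multiplicative.ofAdd c))

theorem coord_shift (f : ↥(indCarrier p χt)) (a a' : ZMod p) :
    coordEquiv χ χt hχ (indRep p χt (HM p a' 0 0) f) a = coordEquiv χ χt hχ f (a + a') := by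
  show (f : ↥(Heis p) → ℂ) (HM p a 0 0 * HM p a' 0 0) = (f : ↥(Heis p) → ℂ) (HM p (a + a') 0 0)
  rw [HM_mul]; ring_nf

theorem coord_mulop (f : ↥(indCarrier p χt)) (a b : ZMod p) :
    coordEquiv χ χt hχ (indRep p χt (HM p 0 b 0) f) a =
      (χ (Multiplicative.ofAdd (a * b)) : ℂ) * coordEquiv χ χt hχ f a := by
  show (f : ↥(Heis p) → ℂ) (HM p a 0 0 * HM p 0 b 0) = _
  have h1 : HM p a 0 0 * HM p 0 b 0 = HM p a b (a * b) := by rw [HM_mul]; ring_nf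
  have h2 : HM p 0 b (a * b) * HM p a 0 0 = HM p a b (a * b) := by rw [HM_mul]; ring_nf
  have := f.2 ⟨HM p 0 b (a * b), HM_mem_lag b (a * b)⟩ (HM p a 0 0)
  rw [show ((⟨HM p 0 b (a * b), HM_mem_lag b (a * b)⟩ : ↥(Lag p)) : ↥(Heis p)) = HM p 0 b (a * b)
    from rfl, h2, hχ ⟨HM p 0 b (a * b), HM_mem_lag b (a * b)⟩ b (a * b) rfl] at this
  rw [h1, this]
  rfl

variable [Fact p.Prime]

theorem sum_char (hχ1 : χ ≠ 1) : ∑ x : ZMod p, (χ (Multiplicative.ofAdd x) : ℂ) = 0 := by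
  obtain ⟨z, hz⟩ := DFunLike.ne_iff.mp hχ1
  have hz' : (χ z : ℂ) ≠ 1 := fun h => hz (Units.ext (by simpa using h))
  set S := ∑ x : ZMod p, (χ (Multiplicative.ofAdd x) : ℂ) with hS
  have key : (χ z : ℂ) * S = S := by
    rw [hS, Finset.mul_sum]
    refine Fintype.sum_equiv (Equiv.addLeft z.toAdd) _ _ fun x => ?_
    have : z * Multiplicative.ofAdd x = Multiplicative.ofAdd (z.toAdd + x) := rfl
    rw [← Units.val_mul, ← _root_.map_mul, this]
    rfl
  have : ((χ z : ℂ) - 1) * S = 0 := by rw [sub_mul, key, one_mul, sub_self]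
  rcases mul_eq_zero.mp this with h | h
  · exact absurd (by linear_combination h) hz'
  · exact h

theorem sum_char_mul (hχ1 : χ ≠ 1) (d : ZMod p) (hd : d ≠ 0) :
    ∑ b : ZMod p, (χ (Multiplicative.ofAdd (d * b)) : ℂ) = 0 := by
  rw [← sum_char χ hχ1]
  exact Fintype.sum_equiv (Equiv.mulLeft₀ d hd) _ _ fun b => rfl

theorem sum_char_delta (hχ1 : χ ≠ 1) (a a0 : ZMod p) :
    ∑ b : ZMod p, (χ (Multiplicative.ofAdd ((a - a0) * b)) : ℂ) =
      if a = a0 then (p : ℂ) else 0 := by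
  by_cases h : a = a0
  · subst h
    simp [ZMod.card]
  · rw [if_neg h]
    exact sum_char_mul χ hχ1 _ (sub_ne_zero_of_ne h)

end Aux3
set_option synthInstance.maxHeartbeats 1000000 in
theorem finrank_indCarrier {p : ℕ} [Fact p.Prime]
    (χ : Multiplicative (ZMod p) →* ℂˣ) (χt : ↥(Lag p) →* ℂˣ)
    (hχ : ∀ (l : ↥(Lag p)) (b c : ZMod p),
      (l : ↥(Heis p)) = HM p 0 b c → χt l = χ (Multiplicative.ofAdd c)) :
    Module.finrank ℂ ↥(indCarrier p χt) = p := by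
  rw [(coordEquiv χ χt hχ).finrank_eq, Module.finrank_pi, ZMod.card]

set_option synthInstance.maxHeartbeats 1000000 in
theorem invariant_top {p : ℕ} [Fact p.Prime]
    (χ : Multiplicative (ZMod p) →* ℂˣ) (χt : ↥(Lag p) →* ℂˣ)
    (hχ : ∀ (l : ↥(Lag p)) (b c : ZMod p),
      (l : ↥(Heis p)) = HM p 0 b c → χt l = χ (Multiplicative.ofAdd c))
    (hχ1 : χ ≠ 1) (W : Submodule ℂ ↥(indCarrier p χt))
    (hWinv : ∀ (g : ↥(Heis p)) (f : ↥(indCarrier p χt)), f ∈ W → indRep p χt g f ∈ W)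
    (hW : W ≠ ⊥) : W = ⊤ := by
  obtain ⟨f, hfW, hf0⟩ := Submodule.exists_mem_ne_zero_of_ne_bot hW
  have hEf : coordEquiv χ χt hχ f ≠ 0 := fun h =>
    hf0 ((map_eq_zero_iff _ (coordEquiv χ χt hχ).injective).mp h)
  obtain ⟨a0, ha0⟩ := Function.ne_iff.mp hEf
  simp only [Pi.zero_apply] at ha0
  have hp0 : (p : ℂ) ≠ 0 := Nat.cast_ne_zero.mpr (Fact.out : p.Prime).ne_zero
  -- the projection of f onto the a0 coordinate
  have hqE : ∀ a, coordEquiv χ χt hχ ((p : ℂ)⁻¹ • ∑ b : ZMod p,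
      (χ (Multiplicative.ofAdd (-(a0 * b))) : ℂ) • (indRep p χt (HM p 0 b 0) f)) a =
      if a = a0 then coordEquiv χ χt hχ f a0 else 0 := by
    intro a
    rw [_root_.map_smul, _root_.map_sum]
    simp only [_root_.map_smul, Pi.smul_apply, Finset.sum_apply, smul_eq_mul]
    have step : ∀ b : ZMod p, (χ (Multiplicative.ofAdd (-(a0 * b))) : ℂ) *
        coordEquiv χ χt hχ (indRep p χt (HM p 0 b 0) f) a =
        (χ (Multiplicative.ofAdd ((a - a0) * b)) : ℂ) * coordEquiv χ χt hχ f a := by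
      intro b
      rw [coord_mulop χ χt hχ, ← mul_assoc, ← Units.val_mul, ← _root_.map_mul, ← ofAdd_add]
      congr 3
      ring
    rw [Finset.sum_congr rfl fun b _ => step b, ← Finset.sum_mul, sum_char_delta χ hχ1 a a0]
    by_cases h : a = a0
    · rw [if_pos h, if_pos h, h, inv_mul_cancel_left₀ hp0]
    · rw [if_neg h, if_neg h, zero_mul, mul_zero]
  set q : ↥(indCarrier p χt) := (p : ℂ)⁻¹ • ∑ b : ZMod p,
    (χ (Multiplicative.ofAdd (-(a0 * b))) : ℂ) • (indRep p χt (HM p 0 b 0) f) with hq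
  have hqW : q ∈ W := W.smul_mem _ (W.sum_mem fun b _ =>
    W.smul_mem _ (hWinv (HM p 0 b 0) f hfW))
  -- shifted delta functions
  have hrW : ∀ a' : ZMod p, indRep p χt (HM p (a0 - a') 0 0) q ∈ W :=
    fun a' => hWinv _ q hqW
  have hrE : ∀ a' a : ZMod p, coordEquiv χ χt hχ (indRep p χt (HM p (a0 - a') 0 0) q) a =
      if a = a' then coordEquiv χ χt hχ f a0 else 0 := by
    intro a' a
    rw [coord_shift χ χt hχ, hqE]
    congr 1
    simp only [eq_iff_iff]
    constructor
    · intro h; have := congrArg (fun x => x - (a0 - a')) h; simpa using this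
    · intro h; rw [h]; ring
  rw [eq_top_iff]
  intro v _
  have hv : (∑ a' : ZMod p, (coordEquiv χ χt hχ v a' / coordEquiv χ χt hχ f a0) •
      indRep p χt (HM p (a0 - a') 0 0) q) = v := by
    apply (coordEquiv χ χt hχ).injective
    funext a
    rw [_root_.map_sum, Finset.sum_apply]
    rw [Finset.sum_eq_single a]
    · rw [_root_.map_smul]
      simp only [Pi.smul_apply, smul_eq_mul, hrE, if_pos rfl]
      exact div_mul_cancel₀ _ ha0
    · intro b _ hb
      rw [_root_.map_smul]
      simp only [Pi.smul_apply, smul_eq_mul, hrE]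
      rw [if_neg (Ne.symm hb), mul_zero]
    · intro h; exact absurd (Finset.mem_univ a) h
  rw [← hv]
  exact W.sum_mem fun a' _ => W.smul_mem _ (hrW a')
/-- Restriction of a representation to an invariant submodule. -/
def subRep {G V : Type*} [Monoid G] [AddCommGroup V] [Module ℂ V]
    (ρ : Representation ℂ G V) (K : Submodule ℂ V) (hK : ∀ g, ∀ v ∈ K, ρ g v ∈ K) :
    Representation ℂ G ↥K where
  toFun g := (ρ g).restrict (hK g)
  map_one' := by
    apply LinearMap.ext; intro v; apply Subtype.ext
    simp [LinearMap.restrict_apply]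
  map_mul' g h := by
    apply LinearMap.ext; intro v; apply Subtype.ext
    simp [LinearMap.restrict_apply]
theorem mono_inj {G : Type} [Monoid G] {Y X : FDRep ℂ G} (f : Y ⟶ X) [Mono f] :
    Function.Injective f.hom := by
  rw [← LinearMap.ker_eq_bot]
  have hfd : FiniteDimensional ℂ ↥(Y.V.obj) := Y.V.property
  set K := LinearMap.ker f.hom.hom.hom with hKdef
  have hK : ∀ g, ∀ v ∈ K, Y.ρ g v ∈ K := by
    intro g v hv
    have hc := congrArg (fun (φ : Y.V ⟶ X.V) => φ v) (f.comm g)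
    simp only at hc
    have hv' : f.hom v = 0 := hv
    show f.hom (Y.ρ g v) = 0
    have h2 : f.hom (Y.ρ g v) = X.ρ g (f.hom v) := hc
    rw [h2, hv', map_zero]
  let ι : FDRep.of (subRep Y.ρ K hK) ⟶ Y := ⟨ConcreteCategory.ofHom K.subtype, fun g => FGModuleCat.hom_ext (LinearMap.ext fun v => rfl)⟩
  have hι : ι ≫ f = 0 := by
    apply Action.hom_ext
    rw [Action.comp_hom, Action.zero_hom]
    apply FGModuleCat.hom_ext
    apply LinearMap.ext
    intro v
    exact v.2
  have hι0 : ι = 0 := (cancel_mono f).mp (by rw [hι, Limits.zero_comp])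
  have hhom := congrArg Action.Hom.hom hι0
  rw [Action.zero_hom] at hhom
  rw [eq_bot_iff]
  intro v hv
  have h2 := congrArg (fun (φ : FGModuleCat.of ℂ ↥K ⟶ Y.V) => φ ⟨v, hv⟩) hhom
  exact (Submodule.mem_bot ℂ).mpr (h2.trans rfl)


/-- The representation of the Heisenberg group `H_p` induced from the character
`χ̃ : [[1,0,c],[0,1,b],[0,0,1]] ↦ χ(c)` of the Lagrangian subgroup, with `χ` a nontrivial
character of `ZMod p`, is irreducible of dimension `p`. -/
theorem induced_from_lagrangian_irreducible (p : ℕ) [Fact p.Prime]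
    (χ : Multiplicative (ZMod p) →* ℂˣ) (hχ : χ ≠ 1)
    (χt : ↥(Lag p) →* ℂˣ)
    (hχt : ∀ (l : ↥(Lag p)) (b c : ZMod p),
      (((l : ↥(Heis p)) : GL (Fin 3) (ZMod p)) : Matrix (Fin 3) (Fin 3) (ZMod p)) =
        heisMat p 0 b c → χt l = χ (Multiplicative.ofAdd c)) :
    Simple (FDRep.of (indRep p χt)) ∧ Module.finrank ℂ ↥(indCarrier p χt) = p := by
  have hχ' : ∀ (l : ↥(Lag p)) (b c : ZMod p),
      (l : ↥(Heis p)) = HM p 0 b c → χt l = χ (Multiplicative.ofAdd c) :=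
    fun l b c hl => hχt l b c (by rw [hl]; rfl)
  have hdim := finrank_indCarrier χ χt hχ'
  refine ⟨⟨?_⟩, hdim⟩
  intro Y f hmono
  constructor
  · intro hiso hf0
    have hid : 𝟙 (FDRep.of (indRep p χt)) = 0 :=
      (IsIso.inv_hom_id f).symm.trans
        ((congrArg (fun t => CategoryTheory.inv f ≫ t) hf0).trans Limits.comp_zero)
    have hhom := congrArg Action.Hom.hom hid
    rw [Action.id_hom, Action.zero_hom] at hhom
    have hz : ∀ x : ↥(indCarrier p χt), x = 0 := by
      intro x
      have h2 := congrArg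
        (fun (φ : (FDRep.of (indRep p χt)).V ⟶ (FDRep.of (indRep p χt)).V) => φ x) hhom
      exact h2.trans rfl
    have hsub : Subsingleton ↥(indCarrier p χt) := ⟨fun a b => by rw [hz a, hz b]⟩
    have h0 : Module.finrank ℂ ↥(indCarrier p χt) = 0 :=
      Module.finrank_zero_of_subsingleton
    rw [hdim] at h0
    exact (Fact.out : p.Prime).ne_zero h0
  · intro hf0
    have hinj : Function.Injective f.hom := mono_inj f
    set R : Submodule ℂ ↥(indCarrier p χt) := LinearMap.range f.hom.hom.hom with hR
    have hRinv : ∀ (g : ↥(Heis p)) (w : ↥(indCarrier p χt)), w ∈ R → indRep p χt g w ∈ R := by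
      intro g w hw
      obtain ⟨v, rfl⟩ := hw
      have hc := congrArg
        (fun (φ : Y.V ⟶ (FDRep.of (indRep p χt)).V) => φ v) (f.comm g)
      simp only at hc
      have hc' : f.hom (Y.ρ g v) = indRep p χt g (f.hom v) := hc
      exact ⟨Y.ρ g v, hc'⟩
    have hRne : R ≠ ⊥ := by
      intro h
      apply hf0
      apply Action.hom_ext
      rw [Action.zero_hom]
      apply FGModuleCat.hom_ext
      apply LinearMap.ext; intro v
      have hmem : f.hom v ∈ R := ⟨v, rfl⟩
      rw [h] at hmem
      exact ((Submodule.mem_bot ℂ).mp hmem).trans rfl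
    have hRtop := invariant_top χ χt hχ' hχ R hRinv hRne
    have hsurj : Function.Surjective f.hom := LinearMap.range_eq_top.mp hRtop
    let e : ↥(Y.V.obj) ≃ₗ[ℂ] ↥(indCarrier p χt) :=
      LinearEquiv.ofBijective (f.hom.hom.hom : ↥(Y.V.obj) →ₗ[ℂ] ↥(indCarrier p χt)) ⟨hinj, hsurj⟩
    let eL : (FDRep.of (indRep p χt)).V ⟶ Y.V := ConcreteCategory.ofHom e.symm.toLinearMap
    have hcomm : ∀ h : ↥(Heis p),
        Action.ρ (FDRep.of (indRep p χt)) h ≫ eL = eL ≫ Action.ρ Y h := by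
      intro h
      apply FGModuleCat.hom_ext
      apply LinearMap.ext; intro w
      show e.symm (indRep p χt h w) = Y.ρ h (e.symm w)
      apply e.injective
      rw [e.apply_symm_apply]
      have hc := congrArg
        (fun (φ : Y.V ⟶ (FDRep.of (indRep p χt)).V) => φ (e.symm w)) (f.comm h)
      simp only at hc
      show indRep p χt h w = f.hom (Y.ρ h (e.symm w))
      have hw : f.hom (e.symm w) = w := e.apply_symm_apply w
      have hc' : f.hom (Y.ρ h (e.symm w)) = indRep p χt h (f.hom (e.symm w)) := hc
      rw [hc', hw]
    let g : FDRep.of (indRep p χt) ⟶ Y := ⟨eL, hcomm⟩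
    refine ⟨⟨g, ?_, ?_⟩⟩
    · apply Action.hom_ext
      rw [Action.comp_hom, Action.id_hom]
      apply FGModuleCat.hom_ext
      apply LinearMap.ext; intro v
      exact e.symm_apply_apply v
    · apply Action.hom_ext
      rw [Action.comp_hom, Action.id_hom]
      apply FGModuleCat.hom_ext
      apply LinearMap.ext; intro w
      exact e.apply_symm_apply w
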